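/- Let φ : ℝ³ → ℝ be 1-Lipschitz, let δ > 0, let p₁, p₂ ∈ ℝ³ and let θ₁, θ₂ ∈ ℝ³ be unit vectors such that for i = 1, 2 one has φ(pᵢ + δ·θᵢ) = φ(pᵢ) + δ and φ(pᵢ − δ·θᵢ) = φ(pᵢ) − δ. Then ‖θ₁ − θ₂‖ ≤ (1/δ)·‖p₁ − p₂‖. -/
import Mathlib


local notation "ℝ³" => EuclideanSpace ℝ (Fin 3)

theorem stmt_1 (φ : ℝ³ → ℝ) (hφ : ∀ x y : ℝ³, |φ x - φ y| ≤ ‖x - y‖)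
    (δ : ℝ) (hδ : 0 < δ) (p₁ p₂ θ₁ θ₂ : ℝ³)
    (hθ₁ : ‖θ₁‖ = 1) (hθ₂ : ‖θ₂‖ = 1)
    (h1p : φ (p₁ + δ • θ₁) = φ p₁ + δ) (h1m : φ (p₁ - δ • θ₁) = φ p₁ - δ)
    (h2p : φ (p₂ + δ • θ₂) = φ p₂ + δ) (h2m : φ (p₂ - δ • θ₂) = φ p₂ - δ) :
    ‖θ₁ - θ₂‖ ≤ (1 / δ) * ‖p₁ - p₂‖ := by
  obtain ⟨a, ha⟩ : ∃ a : ℝ³, a = p₁ - p₂ := ⟨_, rfl⟩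
  obtain ⟨s, hs⟩ : ∃ s : ℝ³, s = δ • (θ₁ + θ₂) := ⟨_, rfl⟩
  have e1 : (p₁ + δ • θ₁) - (p₂ - δ • θ₂) = a + s := by
    rw [ha, hs, smul_add]; abel
  have e2 : (p₂ + δ • θ₂) - (p₁ - δ • θ₁) = -(a - s) := by
    rw [ha, hs, smul_add]; abel
  have h1 : φ p₁ - φ p₂ + 2 * δ ≤ ‖a + s‖ := by
    have := (abs_le.mp (hφ (p₁ + δ • θ₁) (p₂ - δ • θ₂))).2
    rw [e1, h1p, h2m] at this; linarith
  have h2 : φ p₂ - φ p₁ + 2 * δ ≤ ‖a - s‖ := by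
    have := (abs_le.mp (hφ (p₂ + δ • θ₂) (p₁ - δ • θ₁))).2
    rw [e2, norm_neg, h2p, h1m] at this; linarith
  have hsum : 4 * δ ≤ ‖a + s‖ + ‖a - s‖ := by linarith
  have hpar : ‖a + s‖ ^ 2 + ‖a - s‖ ^ 2 = 2 * (‖a‖ ^ 2 + ‖s‖ ^ 2) := by
    rw [@norm_add_sq_real ℝ³, @norm_sub_sq_real ℝ³]; ring
  have hsq : (4 * δ) ^ 2 ≤ 4 * (‖a‖ ^ 2 + ‖s‖ ^ 2) := by
    nlinarith [sq_nonneg (‖a + s‖ - ‖a - s‖), norm_nonneg (a + s), norm_nonneg (a - s)]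
  have hns : ‖s‖ = δ * ‖θ₁ + θ₂‖ := by
    rw [hs, norm_smul, Real.norm_eq_abs, abs_of_pos hδ]
  have hparθ : ‖θ₁ + θ₂‖ ^ 2 + ‖θ₁ - θ₂‖ ^ 2 = 4 := by
    rw [@norm_add_sq_real ℝ³, @norm_sub_sq_real ℝ³, hθ₁, hθ₂]; ring
  have h4 : ‖θ₁ + θ₂‖ ^ 2 = 4 - ‖θ₁ - θ₂‖ ^ 2 := by linarith
  have hs2 : ‖s‖ ^ 2 = δ ^ 2 * (4 - ‖θ₁ - θ₂‖ ^ 2) := by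
    rw [hns, mul_pow, h4]
  rw [hs2] at hsq
  have key : δ ^ 2 * ‖θ₁ - θ₂‖ ^ 2 ≤ ‖a‖ ^ 2 := by nlinarith [hsq]
  have hmul : δ * ‖θ₁ - θ₂‖ ≤ ‖a‖ := by
    have h0 : 0 ≤ δ * ‖θ₁ - θ₂‖ := mul_nonneg hδ.le (norm_nonneg _)
    have hk : (δ * ‖θ₁ - θ₂‖) ^ 2 ≤ ‖a‖ ^ 2 := by rw [mul_pow]; exact key
    exact (pow_le_pow_iff_left₀ h0 (norm_nonneg a) two_ne_zero).mp hk
  rw [one_div, inv_mul_eq_div, le_div_iff₀ hδ, ← ha]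
  linarith
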